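/- Let P be a finite poset with unique minimum, G a finite group acting on P by order-preserving automorphisms and acting linearly on a finite-dimensional F-vector space V with #G invertible in F. Suppose {V_x : x ∈ P} is a G-equivariant P-filtration (g·V_x = V_{g·x}) with dim V = Σ_{x∈P} dim V_{=x}. Then V is isomorphic as a G-module to the direct sum over orbit representatives x of the induced modules Ind_{G_x}^G(V_{=x}), where G_x is the stabilizer of x. -/

import Mathlib

/-- For a `P`-filtration `filt`, the subspace `V_{>x} = Σ_{y > x} V_y`. -/
def filtGT {F V P : Type*} [Field F] [AddCommGroup V] [Module F V] [PartialOrder P]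
    (filt : P → Submodule F V) (x : P) : Submodule F V :=
  ⨆ y ∈ {y : P | x < y}, filt y

/-- The subquotient `V_{=x} = V_x / V_{>x}` of a `P`-filtration. -/
abbrev filtEq {F V P : Type*} [Field F] [AddCommGroup V] [Module F V] [PartialOrder P]
    (filt : P → Submodule F V) (x : P) :=
  (filt x) ⧸ (Submodule.comap (filt x).subtype (filtGT filt x))

/-- Auxiliary: summation map from a product of submodules into the ambient space. -/
def sumPi {F V P : Type*} [Field F] [AddCommGroup V] [Module F V] [Fintype P]
    (W : P → Submodule F V) : (∀ x : P, W x) →ₗ[F] V where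
  toFun f := ∑ x : P, (f x : V)
  map_add' f g := by simp [Finset.sum_add_distrib]
  map_smul' c f := by simp [Finset.smul_sum]

lemma sumPi_single {F V P : Type*} [Field F] [AddCommGroup V] [Module F V] [Fintype P]
    [DecidableEq P] (W : P → Submodule F V) (x : P) (w : W x) :
    sumPi W (Pi.single x w) = (w : V) := by
  simp only [sumPi, LinearMap.coe_mk, AddHom.coe_mk]
  rw [Finset.sum_eq_single x]
  · simp
  · intro y _ hy
    rw [Pi.single_eq_of_ne hy]
    simp
  · simp

/-- Let `G` be a finite group acting by order-preserving
automorphisms on a finite poset `P` with minimum, and acting linearly (via `ρ`)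
on a finite-dimensional `F`-vector space `V` with `#G` invertible in `F`.
Let `{V_x}` be a `G`-equivariant `P`-filtration with
`dim V = Σ_x dim V_{=x}`.  Then `V ≅ ⊕_{[x] ∈ P/G} Ind_{G_x}^G (V_{=x})` as
`G`-modules.  We formalize the right-hand side by its canonical concrete model:
the `F`-vector space `Π x : P, V_{=x}` on which `g ∈ G` acts by sending the
component at `x` to the component at `g • x` via the map `τ g x` induced by
`ρ g` on subquotients (this module is canonically the direct sum, over a set of
orbit representatives `x`, of the modules induced from the stabilizer
`G_x`-modules `V_{=x}`). -/
theorem P_filtration_equivariant_decomposition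
    {F V P G : Type*} [Field F] [AddCommGroup V] [Module F V]
    [FiniteDimensional F V] [Fintype P] [PartialOrder P] [OrderBot P]
    [Group G] [Fintype G] [MulAction G P]
    (hord : ∀ g : G, Monotone (fun x : P => g • x))
    (ρ : Representation F G V)
    (hG : (Fintype.card G : F) ≠ 0)
    (filt : P → Submodule F V)
    (hanti : ∀ x y : P, x ≤ y → filt y ≤ filt x)
    (hbot : filt ⊥ = ⊤)
    (hequiv : ∀ (g : G) (x : P), (filt x).map (ρ g) = filt (g • x))
    (hdim : Module.finrank F V = ∑ x : P, Module.finrank F (filtEq filt x))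
    -- the maps induced by `ρ g` on the subquotients `V_{=x} → V_{=g•x}` :
    (τ : ∀ (g : G) (x : P), filtEq filt x →ₗ[F] filtEq filt (g • x))
    (hτ : ∀ (g : G) (x : P) (v : filt x) (w : filt (g • x)),
      (w : V) = ρ g (v : V) →
      τ g x (Submodule.Quotient.mk v) = Submodule.Quotient.mk w) :
    ∃ e : V ≃ₗ[F] (∀ x : P, filtEq filt x),
      ∀ (g : G) (v : V) (x : P), e (ρ g v) (g • x) = τ g x (e v x) := by
  classical
  -- strict monotonicity of the action
  have hsm : ∀ (g : G) {x y : P}, x < y → g • x < g • y := by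
    intro g x y hxy
    refine lt_of_le_of_ne (hord g hxy.le) fun h => hxy.ne (MulAction.injective g h)
  -- membership version of equivariance
  have hmemf : ∀ (g : G) (x : P) (v : V), v ∈ filt x → ρ g v ∈ filt (g • x) := by
    intro g x v hv
    rw [← hequiv g x]
    exact Submodule.mem_map_of_mem hv
  -- equivariance of filtGT
  have hmapGT : ∀ (g : G) (x : P), (filtGT filt x).map (ρ g) = filtGT filt (g • x) := by
    intro g x
    have h1 : (filtGT filt x).map (ρ g) = ⨆ y ∈ {y : P | x < y}, (filt y).map (ρ g) := by
      simp [filtGT, Submodule.map_iSup]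
    rw [h1]
    simp only [hequiv]
    apply le_antisymm
    · exact iSup₂_le fun y hy => le_iSup₂_of_le (g • y) (hsm g hy) le_rfl
    · refine iSup₂_le fun z hz => ?_
      refine le_iSup₂_of_le (g⁻¹ • z) ?_ ?_
      · have := hsm g⁻¹ hz; simpa using this
      · simp
  have hmemGT : ∀ (g : G) (x : P) (v : V), v ∈ filtGT filt x → ρ g v ∈ filtGT filt (g • x) := by
    intro g x v hv
    rw [← hmapGT g x]
    exact Submodule.mem_map_of_mem hv
  have hGTle : ∀ x : P, filtGT filt x ≤ filt x :=
    fun x => iSup₂_le fun y hy => hanti x y hy.le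
  -- choose (non-equivariant) projections onto filtGT
  have hqex : ∀ x : P, ∃ q : V →ₗ[F] V,
      (∀ v, q v ∈ filtGT filt x) ∧ ∀ v ∈ filtGT filt x, q v = v := by
    intro x
    obtain ⟨p, hp⟩ := Submodule.exists_isCompl (filtGT filt x)
    refine ⟨(filtGT filt x).subtype ∘ₗ (filtGT filt x).projectionOnto p hp, fun v => by simp,
      fun v hv => ?_⟩
    have h2 := Submodule.linearProjOfIsCompl_apply_left hp ⟨v, hv⟩
    simp only [LinearMap.coe_comp, Function.comp_apply, Submodule.coe_subtype]
    rw [show v = ((⟨v, hv⟩ : filtGT filt x) : V) from rfl, h2]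
  choose q hq1 hq2 using hqex
  -- the averaged equivariant projections
  set c : F := (Fintype.card G : F)⁻¹ with hc
  set Q : P → V →ₗ[F] V :=
    fun x => c • ∑ g : G, (ρ g) ∘ₗ (q (g⁻¹ • x)) ∘ₗ (ρ g⁻¹) with hQ
  have Qapply : ∀ (x : P) (v : V),
      Q x v = c • ∑ g : G, ρ g (q (g⁻¹ • x) (ρ g⁻¹ v)) := by
    intro x v
    simp [hQ, LinearMap.sum_apply]
  have hρρ : ∀ (g h : G) (v : V), ρ g (ρ h v) = ρ (g * h) v := by
    intro g h v
    rw [map_mul]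
    rfl
  have hQmem : ∀ (x : P) (v : V), Q x v ∈ filtGT filt x := by
    intro x v
    rw [Qapply]
    refine Submodule.smul_mem _ _ (Submodule.sum_mem _ fun g _ => ?_)
    have h1 : q (g⁻¹ • x) (ρ g⁻¹ v) ∈ filtGT filt (g⁻¹ • x) := hq1 _ _
    have h2 := hmemGT g (g⁻¹ • x) _ h1
    simpa using h2
  have hQid : ∀ (x : P) (v : V), v ∈ filtGT filt x → Q x v = v := by
    intro x v hv
    have hterm : ∀ g : G, ρ g (q (g⁻¹ • x) (ρ g⁻¹ v)) = v := by
      intro g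
      rw [hq2 _ _ (hmemGT g⁻¹ x v hv), hρρ]
      simp
    rw [Qapply]
    simp only [hterm, Finset.sum_const, Finset.card_univ]
    rw [← Nat.cast_smul_eq_nsmul F, smul_smul, hc, inv_mul_cancel₀ hG, one_smul]
  have hQequiv : ∀ (g : G) (x : P) (v : V), Q (g • x) (ρ g v) = ρ g (Q x v) := by
    intro g x v
    rw [Qapply, Qapply, map_smul, map_sum]
    congr 1
    refine Fintype.sum_equiv (Equiv.mulLeft g⁻¹) _ _ fun k => ?_
    simp only [Equiv.coe_mulLeft]
    have e1 : (g⁻¹ * k)⁻¹ • x = k⁻¹ • (g • x) := by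
      rw [mul_inv_rev, inv_inv, mul_smul]
    rw [e1]
    simp only [hρρ]
    rw [mul_inv_cancel_left, mul_inv_rev, inv_inv]
  -- the equivariant complements
  set W : P → Submodule F V := fun x => filt x ⊓ LinearMap.ker (Q x) with hW
  have hWle : ∀ x : P, W x ≤ filt x := fun x => inf_le_left
  have hsplit : ∀ (x : P) (v : V), v ∈ filt x → v - Q x v ∈ W x := by
    intro x v hv
    have hk : (Q x) (v - Q x v) = 0 := by
      rw [map_sub, hQid x (Q x v) (hQmem x v), sub_self]
    exact ⟨Submodule.sub_mem _ hv (hGTle x (hQmem x v)), LinearMap.mem_ker.mpr hk⟩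
  have hWsm : ∀ (g : G) (x : P) (v : V), v ∈ W x → ρ g v ∈ W (g • x) := by
    intro g x v hv
    have hk : (Q (g • x)) (ρ g v) = 0 := by
      rw [hQequiv g x v, LinearMap.mem_ker.mp hv.2, map_zero]
    exact ⟨hmemf g x v hv.1, LinearMap.mem_ker.mpr hk⟩
  -- the map from W x to the subquotient
  set m : ∀ x : P, W x →ₗ[F] filtEq filt x :=
    fun x => (Submodule.comap (filt x).subtype (filtGT filt x)).mkQ ∘ₗ
      Submodule.inclusion (hWle x) with hm
  have hmapp : ∀ (x : P) (w : W x),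
      m x w = Submodule.Quotient.mk (⟨(w : V), (hWle x) w.2⟩ : filt x) := by
    intro x w
    rfl
  have hminj : ∀ x : P, Function.Injective (m x) := by
    intro x
    rw [← LinearMap.ker_eq_bot]
    rw [Submodule.eq_bot_iff]
    intro w hw
    rw [LinearMap.mem_ker, hmapp, Submodule.Quotient.mk_eq_zero, Submodule.mem_comap] at hw
    have hw2 : (w : V) ∈ filtGT filt x := hw
    have : (w : V) = Q x (w : V) := (hQid x _ hw2).symm
    have hz : (w : V) = 0 := by
      rw [this, (LinearMap.mem_ker).mp w.2.2]
    exact Subtype.ext hz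
  have hmsurj : ∀ x : P, Function.Surjective (m x) := by
    intro x
    intro z
    obtain ⟨u, rfl⟩ := Submodule.mkQ_surjective _ z
    refine ⟨⟨(u : V) - Q x (u : V), hsplit x (u : V) u.2⟩, ?_⟩
    rw [hmapp, Submodule.mkQ_apply, Submodule.Quotient.eq]
    refine Submodule.mem_comap.mpr ?_
    simp only [Submodule.coe_sub, Submodule.coe_subtype]
    have heq : ((u : V) - Q x (u : V)) - (u : V) = -(Q x (u : V)) := by abel
    show ((u : V) - Q x (u : V)) - (u : V) ∈ filtGT filt x
    rw [heq]
    exact neg_mem (hQmem x (u : V))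
  set ι : ∀ x : P, (W x) ≃ₗ[F] filtEq filt x :=
    fun x => LinearEquiv.ofBijective (m x) ⟨hminj x, hmsurj x⟩ with hι
  -- the summation map is surjective
  set S : (∀ x : P, W x) →ₗ[F] V := sumPi W with hS
  have hrange : ∀ x : P, filt x ≤ LinearMap.range S := by
    intro x
    induction x using WellFoundedGT.induction with
    | _ x ih =>
      intro v hv
      have h1 : v - Q x v ∈ LinearMap.range S := by
        refine ⟨Pi.single x ⟨v - Q x v, hsplit x v hv⟩, ?_⟩
        exact sumPi_single W x _
      have h2 : Q x v ∈ LinearMap.range S := by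
        have : filtGT filt x ≤ LinearMap.range S :=
          iSup₂_le fun y hy => ih y hy
        exact this (hQmem x v)
      simpa using add_mem h1 h2
  have hSsurj : Function.Surjective S := by
    rw [← LinearMap.range_eq_top]
    rw [eq_top_iff, ← hbot]
    exact hrange ⊥
  have hrank : Module.finrank F (∀ x : P, W x) = Module.finrank F V := by
    rw [Module.finrank_pi_fintype, hdim]
    exact Finset.sum_congr rfl fun x _ => (ι x).finrank_eq
  have hSinj : Function.Injective S :=
    (LinearMap.injective_iff_surjective_of_finrank_eq_finrank hrank).mpr hSsurj
  set Se : (∀ x : P, W x) ≃ₗ[F] V := LinearEquiv.ofBijective S ⟨hSinj, hSsurj⟩ with hSe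
  refine ⟨Se.symm.trans (LinearEquiv.piCongrRight ι), ?_⟩
  intro g v x
  set f : ∀ x : P, W x := Se.symm v with hf
  set f' : ∀ y : P, W y := fun y => ⟨ρ g ((f (g⁻¹ • y) : V)), by
    have := hWsm g (g⁻¹ • y) _ (f (g⁻¹ • y)).2
    simpa using this⟩ with hf'
  have hSf : S f = v := Se.apply_symm_apply v
  have hSf' : Se f' = ρ g v := by
    show S f' = ρ g v
    have h1 : S f' = ∑ y : P, ρ g ((f (g⁻¹ • y) : V)) := rfl
    rw [h1, ← map_sum, ← hSf]
    congr 1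
    show ∑ y : P, ((f (g⁻¹ • y) : V)) = ∑ y : P, ((f y : V))
    exact Fintype.sum_equiv (MulAction.toPerm g⁻¹) _ _ fun y => by
      rfl
  have hsymm : Se.symm (ρ g v) = f' := by
    rw [← hSf', LinearEquiv.symm_apply_apply]
  have key : ((f (g⁻¹ • (g • x)) : V)) = ((f x : V)) := by
    rw [inv_smul_smul]
  have hwmem : ρ g ((f x : V)) ∈ filt (g • x) := hmemf g x _ (hWle x (f x).2)
  simp only [LinearEquiv.trans_apply]
  have hLHS : (LinearEquiv.piCongrRight ι) (Se.symm (ρ g v)) (g • x)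
      = Submodule.Quotient.mk (⟨ρ g ((f x : V)), hwmem⟩ : filt (g • x)) := by
    rw [hsymm]
    have h3 : (LinearEquiv.piCongrRight ι) f' (g • x) = m (g • x) (f' (g • x)) := rfl
    rw [h3, hmapp]
    congr 1
    refine Subtype.ext ?_
    show ((f' (g • x) : V)) = ρ g ((f x : V))
    rw [hf']
    simp only
    rw [key]
  have hRHS : τ g x ((LinearEquiv.piCongrRight ι) (Se.symm v) x)
      = Submodule.Quotient.mk (⟨ρ g ((f x : V)), hwmem⟩ : filt (g • x)) := by
    have h4 : (LinearEquiv.piCongrRight ι) (Se.symm v) x = m x (f x) := rfl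
    rw [h4, hmapp]
    exact hτ g x ⟨(f x : V), hWle x (f x).2⟩ ⟨ρ g ((f x : V)), hwmem⟩ rfl
  rw [hLHS, hRHS]
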